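/- The tensor A of order 4 and dimension 2 with a_{1111} = 1, a_{1112} = -1, a_{2111} = 1 and all other entries zero satisfies A x^4 = x_1^4 ≥ 0 for all x (so A is positive semi-definite) and A is a column adequate tensor. -/

import Mathlib

open Finset Matrix

/-- For a tensor `A` of order `k+1` and dimension `n`, `tmul A x i = (A x^k)_i`. -/
def tmul {n k : ℕ} (A : Fin n → (Fin k → Fin n) → ℝ) (x : Fin n → ℝ) (i : Fin n) : ℝ :=
  ∑ f : Fin k → Fin n, A i f * ∏ j, x (f j)

/-- A tensor is column adequate if `x_i (A x^{m-1})_i ≤ 0` for all `i` implies `A x^{m-1} = 0`. -/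
def ColumnAdequate {n k : ℕ} (A : Fin n → (Fin k → Fin n) → ℝ) : Prop :=
  ∀ x : Fin n → ℝ, (∀ i, x i * tmul A x i ≤ 0) → ∀ i, tmul A x i = 0

/-- A tensor is row diagonal if `a_{i i2...im}` can be nonzero only when `i2 = ... = im`. -/
def RowDiagonal {n k : ℕ} (A : Fin n → (Fin k → Fin n) → ℝ) : Prop :=
  ∀ i f, A i f ≠ 0 → ∀ j j' : Fin k, f j = f j'

/-- The majorization matrix of a tensor: `M(A)_{ij} = a_{ijj...j}`. -/
def majorization {n k : ℕ} (A : Fin n → (Fin k → Fin n) → ℝ) : Matrix (Fin n) (Fin n) ℝ :=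
  fun i j => A i (fun _ => j)

/-- A square matrix `M` (over any finite index type) is column adequate if
`z_i (Mz)_i ≤ 0` for all `i` implies `Mz = 0`. -/
def MatrixColumnAdequate {ι : Type*} [Fintype ι] (M : Matrix ι ι ℝ) : Prop :=
  ∀ z : ι → ℝ, (∀ i, z i * M.mulVec z i ≤ 0) → M.mulVec z = 0

/-- The order-4 dimension-2 tensor with `a_{1111} = 1`, `a_{1112} = -1`, `a_{2111} = 1`
and all other entries zero. -/
noncomputable def exTensor18 : Fin 2 → (Fin 3 → Fin 2) → ℝ := fun i f =>
  if i = 0 ∧ f = ![0, 0, 0] then 1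
  else if i = 0 ∧ f = ![0, 0, 1] then -1
  else if i = 1 ∧ f = ![0, 0, 0] then 1
  else 0

def fnEquiv : (Fin 2 × Fin 2 × Fin 2) ≃ (Fin 3 → Fin 2) where
  toFun p := ![p.1, p.2.1, p.2.2]
  invFun f := (f 0, f 1, f 2)
  left_inv p := rfl
  right_inv f := by funext i; fin_cases i <;> rfl

lemma sum_fn3 (g : (Fin 3 → Fin 2) → ℝ) :
    ∑ f, g f = g ![0,0,0] + g ![0,0,1] + g ![0,1,0] + g ![0,1,1]
      + g ![1,0,0] + g ![1,0,1] + g ![1,1,0] + g ![1,1,1] := by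
  rw [← Equiv.sum_comp fnEquiv g]
  simp [Fintype.sum_prod_type, Fin.sum_univ_two, fnEquiv]
  simp only [add_assoc] <;> rfl

lemma tmul0 (x : Fin 2 → ℝ) : tmul exTensor18 x 0 = x 0 ^ 2 * (x 0 - x 1) := by
  rw [tmul, sum_fn3]
  norm_num [exTensor18, Fin.prod_univ_three, Matrix.ext_iff.symm, funext_iff, Fin.forall_fin_succ, Matrix.cons_val_two, Matrix.tail_cons, Matrix.head_cons]
  ring

lemma tmul1 (x : Fin 2 → ℝ) : tmul exTensor18 x 1 = x 0 ^ 3 := by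
  rw [tmul, sum_fn3]
  norm_num [exTensor18, Fin.prod_univ_three, Matrix.ext_iff.symm, funext_iff, Fin.forall_fin_succ, Matrix.cons_val_two, Matrix.tail_cons, Matrix.head_cons]
  ring

/-- This tensor satisfies `A x^4 = x_1^4 ≥ 0` (so it is PSD) and is column adequate. -/
theorem exTensor18_PSD_and_column_adequate :
    (∀ x : Fin 2 → ℝ, ∑ i, x i * tmul exTensor18 x i = (x 0) ^ 4) ∧
    (∀ x : Fin 2 → ℝ, 0 ≤ ∑ i, x i * tmul exTensor18 x i) ∧
    ColumnAdequate exTensor18 := by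
  have key : ∀ x : Fin 2 → ℝ, ∑ i, x i * tmul exTensor18 x i = (x 0) ^ 4 := by
    intro x
    rw [Fin.sum_univ_two, tmul0, tmul1]; ring
  refine ⟨key, fun x => by rw [key]; positivity, ?_⟩
  intro x hx
  have h0 : x 0 = 0 := by
    have := hx 0
    have := hx 1
    have hsum : (x 0) ^ 4 ≤ 0 := by
      rw [← key x, Fin.sum_univ_two]; linarith
    have : (x 0) ^ 4 = 0 := le_antisymm hsum (by positivity)
    exact pow_eq_zero_iff (by norm_num) |>.mp this
  intro i
  fin_cases i <;> simp [tmul0, tmul1, h0]
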